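/- Let G be a finite group, H a normal subgroup of prime index p, x in G a lift of a generator of G/H, and F a field (not necessarily algebraically closed) of characteristic 0 or coprime to |G|. Let η be an irreducible F-representation of H with η not equivalent to η^x. Then the p representations η, η^x, …, η^{x^{p-1}} are pairwise inequivalent, the induced representation η↑_H^G is irreducible over F, and η↑_H^G ≅ η^x↑_H^G ≅ … ≅ η^{x^{p-1}}↑_H^G. -/

import Mathlib

open scoped TensorProduct

section Defs

variable {k : Type*} [Field k] {M : Type*} [Monoid M]

/-- Equivalence (isomorphism) of representations of a monoid over a field. -/
def RepIso {V W : Type*} [AddCommGroup V] [Module k V] [AddCommGroup W] [Module k W]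
    (ρ : Representation k M V) (ρ' : Representation k M W) : Prop :=
  ∃ e : V ≃ₗ[k] W, ∀ (g : M) (v : V), e (ρ g v) = ρ' g (e v)

/-- Irreducibility of a representation: the space is nonzero and has no proper nonzero
invariant subspace. -/
def RepIrred {V : Type*} [AddCommGroup V] [Module k V] (ρ : Representation k M V) : Prop :=
  Nontrivial V ∧ ∀ U : Submodule k V, (∀ g : M, ∀ v ∈ U, ρ g v ∈ U) → U = ⊥ ∨ U = ⊤

variable {G : Type*} [Group G]

/-- Conjugation by `x` as a monoid homomorphism of a normal subgroup. -/
def conjHom {H : Subgroup G} (hH : H.Normal) (x : G) : H →* H :=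
  MonoidHom.mk' (fun h => ⟨x * (h : G) * x⁻¹, hH.conj_mem (h : G) h.2 x⟩)
    (by intro a b; ext; push_cast; group)

/-- The conjugate representation `η^x`, `η^x(h) = η (x h x⁻¹)`. -/
def ConjRep {H : Subgroup G} (hH : H.Normal) (x : G) {V : Type*} [AddCommGroup V] [Module k V]
    (η : Representation k H V) : Representation k H V :=
  η.comp (conjHom hH x)

/-- `ρ` is (a model of) the representation of `G` induced from the representation `η` of the
subgroup `H`: there is an `H`-equivariant embedding `ι : V → W` and `W` is the internal direct
sum, over the cosets `gH`, of the translates `ρ(g)(ι V)`. -/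
def IsInducedFrom (H : Subgroup G) {V W : Type*} [AddCommGroup V] [Module k V]
    [AddCommGroup W] [Module k W]
    (η : Representation k H V) (ρ : Representation k G W) : Prop :=
  ∃ ι : V →ₗ[k] W, Function.Injective ι ∧
    (∀ (h : H) (v : V), ι (η h v) = ρ (h : G) (ι v)) ∧
    ∃ S : G ⧸ H → Submodule k W,
      (∀ g : G, S (g : G ⧸ H) = (LinearMap.range ι).map (ρ g)) ∧
      iSupIndep S ∧ iSup S = ⊤

/-- The subrepresentation on an invariant subspace. -/
def SubRep {V : Type*} [AddCommGroup V] [Module k V] (ρ : Representation k M V)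
    (U : Submodule k V) (hU : ∀ g : M, ∀ v ∈ U, ρ g v ∈ U) : Representation k M U where
  toFun g := LinearMap.restrict (ρ g) (hU g)
  map_one' := by ext v; simp [LinearMap.restrict_apply]
  map_mul' g g' := by ext v; simp [LinearMap.restrict_apply]

/-- The direct sum of a family of representations (realized on the product space). -/
def PiRep {ι : Type*} {W : ι → Type*} [∀ i, AddCommGroup (W i)] [∀ i, Module k (W i)]
    (ρ : ∀ i, Representation k M (W i)) : Representation k M (∀ i, W i) where
  toFun g := LinearMap.pi fun i => (ρ i g).comp (LinearMap.proj i)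
  map_one' := by ext v; simp
  map_mul' g g' := by ext v; simp

/-- Extension of scalars of a representation along a field extension `F ⊆ E`. -/
noncomputable def BaseChangeRep {F : Type*} [Field F] (E : Type*) [Field E] [Algebra F E]
    {V : Type*} [AddCommGroup V] [Module F V] (ρ : Representation F M V) :
    Representation E M (E ⊗[F] V) where
  toFun g := LinearMap.baseChange E (ρ g)
  map_one' := by ext v; simp
  map_mul' g g' := by ext v; simp [map_mul]

open scoped Classical in
/-- The conjugacy class sum of `x` in the group algebra. -/
noncomputable def classSum (k : Type*) [Field k] {G : Type*} [Group G] [Fintype G] (x : G) :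
    MonoidAlgebra k G :=
  ∑ g : G, if IsConj x g then MonoidAlgebra.single g (1 : k) else 0

/-- A primitive central idempotent of a ring. -/
def IsPrimCentralIdem {R : Type*} [Ring R] (e : R) : Prop :=
  e ≠ 0 ∧ IsIdempotentElem e ∧ e ∈ Set.center R ∧
    ∀ f : R, f ∈ Set.center R → IsIdempotentElem f → f * e = f → f = 0 ∨ f = e

/-- `e` is the primitive central idempotent of the group algebra attached to the irreducible
representation `ρ`: it is a primitive central idempotent acting as the identity on `ρ`. -/
noncomputable def IsIdemFor {V : Type*} [AddCommGroup V] [Module k V]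
    (ρ : Representation k M V) (e : MonoidAlgebra k M) : Prop :=
  IsPrimCentralIdem e ∧ ρ.asAlgebraHom e = 1

/-- `ρ'` is the twist of the `E`-representation `ρ` by the automorphism `γ` of `E` over `F`. -/
def IsTwist {F E : Type*} [Field F] [Field E] [Algebra F E]
    {V W : Type*} [AddCommGroup V] [Module E V] [AddCommGroup W] [Module E W]
    (γ : E ≃ₐ[F] E) (ρ : Representation E M V) (ρ' : Representation E M W) : Prop :=
  ∃ e : V ≃+ W, (∀ (c : E) (v : V), e (c • v) = γ c • e v) ∧
    ∀ (g : M) (v : V), e (ρ g v) = ρ' g (e v)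

/-- Two `E`-representations are Galois conjugate over `F`. -/
def IsGaloisConj (F : Type*) {E : Type*} [Field F] [Field E] [Algebra F E]
    {V W : Type*} [AddCommGroup V] [Module E V] [AddCommGroup W] [Module E W]
    (ρ : Representation E M V) (ρ' : Representation E M W) : Prop :=
  ∃ γ : E ≃ₐ[F] E, IsTwist γ ρ ρ'

/-- The canonical embedding of the group algebra of a subgroup into the group algebra
of the ambient group. -/
noncomputable def algEmb (k : Type*) [Field k] {G : Type*} [Group G] (H : Subgroup G) :
    MonoidAlgebra k H →ₐ[k] MonoidAlgebra k G :=
  MonoidAlgebra.mapDomainAlgHom k k H.subtype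

end Defs

section Helpers

variable {k : Type*} [Field k] {M : Type*} [Monoid M] {G : Type*} [Group G]
variable {V : Type*} [AddCommGroup V] [Module k V] {V' : Type*} [AddCommGroup V'] [Module k V']
variable {V'' : Type*} [AddCommGroup V''] [Module k V'']

/-- `ρ g` as a linear equivalence. -/
def repEquiv (ρ : Representation k G V) (g : G) : V ≃ₗ[k] V :=
  LinearEquiv.ofLinear (ρ g) (ρ g⁻¹)
    (by rw [← Module.End.mul_eq_comp, ← map_mul, mul_inv_cancel, map_one, Module.End.one_eq_id])
    (by rw [← Module.End.mul_eq_comp, ← map_mul, inv_mul_cancel, map_one, Module.End.one_eq_id])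

@[simp] lemma repEquiv_apply (ρ : Representation k G V) (g : G) (v : V) :
    repEquiv ρ g v = ρ g v := rfl

lemma rep_bijective (ρ : Representation k G V) (g : G) : Function.Bijective (ρ g) :=
  (repEquiv ρ g).bijective

@[refl] lemma RepIso.refl (ρ : Representation k M V) : RepIso ρ ρ :=
  ⟨LinearEquiv.refl k V, fun _ _ => rfl⟩

lemma RepIso.symm {ρ : Representation k M V} {ρ' : Representation k M V'}
    (h : RepIso ρ ρ') : RepIso ρ' ρ := by
  obtain ⟨e, he⟩ := h
  refine ⟨e.symm, fun g v => ?_⟩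
  apply e.injective
  rw [e.apply_symm_apply, he, e.apply_symm_apply]

lemma RepIso.trans {ρ : Representation k M V} {ρ' : Representation k M V'}
    {ρ'' : Representation k M V''}
    (h : RepIso ρ ρ') (h' : RepIso ρ' ρ'') : RepIso ρ ρ'' := by
  obtain ⟨e, he⟩ := h; obtain ⟨e', he'⟩ := h'
  exact ⟨e.trans e', fun g v => by simp [he, he']⟩

variable {H : Subgroup G} (hH : H.Normal)

lemma conjHom_comp (a b : G) : (conjHom hH b).comp (conjHom hH a) = conjHom hH (b * a) := by
  ext h
  show b * (a * (h : G) * a⁻¹) * b⁻¹ = (b * a) * (h : G) * (b * a)⁻¹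
  group

lemma conjRep_conjRep (a b : G) (η : Representation k H V) :
    ConjRep hH a (ConjRep hH b η) = ConjRep hH (b * a) η := by
  show (η.comp (conjHom hH b)).comp (conjHom hH a) = η.comp (conjHom hH (b * a))
  rw [MonoidHom.comp_assoc, conjHom_comp]

lemma conjRep_one (η : Representation k H V) : ConjRep hH 1 η = η := by
  show η.comp (conjHom hH 1) = η
  have : conjHom hH 1 = MonoidHom.id H := by ext h; simp [conjHom]
  rw [this, MonoidHom.comp_id]

lemma RepIso.conj {η : Representation k H V} {η' : Representation k H V'} (g : G)
    (h : RepIso η η') : RepIso (ConjRep hH g η) (ConjRep hH g η') := by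
  obtain ⟨e, he⟩ := h
  exact ⟨e, fun m v => he _ v⟩

lemma repIso_conjRep_of_mem {η : Representation k H V} {h0 : G} (hh0 : h0 ∈ H) :
    RepIso η (ConjRep hH h0 η) := by
  refine ⟨repEquiv η ⟨h0, hh0⟩, fun g v => ?_⟩
  show η ⟨h0, hh0⟩ (η g v) = (η ((conjHom hH h0) g)) (η ⟨h0, hh0⟩ v)
  rw [← Module.End.mul_apply, ← Module.End.mul_apply, ← map_mul, ← map_mul]
  congr 2
  ext
  show h0 * (g : G) = h0 * (g : G) * h0⁻¹ * h0
  group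

end Helpers

section Part1

variable {F : Type*} [Field F] {G : Type*} [Group G]
variable {V : Type*} [AddCommGroup V] [Module F V]
variable {H : Subgroup G} (hH : H.Normal)

/-- The "inertia" subgroup of `η`. -/
def inertia (hH : H.Normal) (η : Representation F H V) : Subgroup G where
  carrier := {g | RepIso η (ConjRep hH g η)}
  one_mem' := by simpa [conjRep_one] using RepIso.refl η
  mul_mem' := by
    intro a b ha hb
    have h1 : RepIso (ConjRep hH b η) (ConjRep hH b (ConjRep hH a η)) := RepIso.conj hH b ha
    rw [conjRep_conjRep] at h1
    exact hb.trans h1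
  inv_mem' := by
    intro a ha
    have h1 : RepIso (ConjRep hH a⁻¹ η) (ConjRep hH a⁻¹ (ConjRep hH a η)) := RepIso.conj hH a⁻¹ ha
    rw [conjRep_conjRep, mul_inv_cancel, conjRep_one] at h1
    exact h1.symm

lemma mem_inertia_iff {η : Representation F H V} {g : G} :
    g ∈ inertia hH η ↔ RepIso η (ConjRep hH g η) := Iff.rfl

lemma mem_of_repIso_conj {p : ℕ} (hp : p.Prime) (hidx : H.index = p)
    {x : G} (hx : Subgroup.zpowers ((x : G ⧸ H)) = ⊤)
    {η : Representation F H V} (hne : ¬ RepIso η (ConjRep hH x η))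
    {g : G} (hg : RepIso η (ConjRep hH g η)) : g ∈ H := by
  by_contra hgH
  have hcard : Nat.card (G ⧸ H) = p := hidx
  have hfact : Fact (Nat.card (G ⧸ H)).Prime := ⟨hcard ▸ hp⟩
  set T := inertia hH η with hT
  have hHT : H ≤ T := fun h hh => repIso_conjRep_of_mem hH hh
  set K := T.map (QuotientGroup.mk' H) with hK
  have hKbot : K ≠ ⊥ := by
    intro hbot
    have : (g : G ⧸ H) ∈ K := ⟨g, hg, rfl⟩
    rw [hbot, Subgroup.mem_bot] at this
    exact hgH ((QuotientGroup.eq_one_iff g).mp this)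
  have hKtop : K = ⊤ := (K.eq_bot_or_eq_top_of_prime_card).resolve_left hKbot
  have hxK : (x : G ⧸ H) ∈ K := hKtop ▸ Subgroup.mem_top _
  obtain ⟨t, ht, htx⟩ := hxK
  have h2 : t⁻¹ * x ∈ H := by
    rw [← QuotientGroup.eq]
    exact htx
  have hxT : x ∈ T := by
    have : x = t * (t⁻¹ * x) := by group
    rw [this]
    exact T.mul_mem ht (hHT h2)
  exact hne hxT

lemma orderOf_mk_eq {p : ℕ} (hidx : H.index = p)
    {x : G} (hx : Subgroup.zpowers ((x : G ⧸ H)) = ⊤) : orderOf ((x : G ⧸ H)) = p := by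
  rw [← Nat.card_zpowers, hx]
  rw [← hidx]
  exact Subgroup.card_top

lemma part1 {p : ℕ} (hp : p.Prime) (hidx : H.index = p)
    {x : G} (hx : Subgroup.zpowers ((x : G ⧸ H)) = ⊤)
    {η : Representation F H V} (hne : ¬ RepIso η (ConjRep hH x η)) :
    ∀ i j : Fin p, i ≠ j →
      ¬ RepIso (ConjRep hH (x ^ (i : ℕ)) η) (ConjRep hH (x ^ (j : ℕ)) η) := by
  intro i j hij hiso
  have h1 : RepIso (ConjRep hH (x ^ (i : ℕ))⁻¹ (ConjRep hH (x ^ (i : ℕ)) η))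
      (ConjRep hH (x ^ (i : ℕ))⁻¹ (ConjRep hH (x ^ (j : ℕ)) η)) :=
    RepIso.conj hH _ hiso
  rw [conjRep_conjRep, conjRep_conjRep, mul_inv_cancel, conjRep_one] at h1
  have hmem : x ^ (j : ℕ) * (x ^ (i : ℕ))⁻¹ ∈ H := mem_of_repIso_conj hH hp hidx hx hne h1
  have hmk : ((x : G ⧸ H)) ^ (j : ℕ) = ((x : G ⧸ H)) ^ (i : ℕ) := by
    have := (QuotientGroup.eq_one_iff _).mpr hmem
    rw [QuotientGroup.mk_mul, QuotientGroup.mk_inv, QuotientGroup.mk_pow, QuotientGroup.mk_pow,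
      mul_inv_eq_one] at this
    exact this
  rw [pow_eq_pow_iff_modEq, orderOf_mk_eq hH hidx hx] at hmk
  exact hij (Fin.ext ((Nat.ModEq.eq_of_lt_of_lt hmk.symm i.2 j.2)))

end Part1


section Induced

variable {F : Type*} [Field F] {G : Type*} [Group G]
variable {H : Subgroup G} (hH : H.Normal)
variable {V : Type*} [AddCommGroup V] [Module F V]
variable {W : Type*} [AddCommGroup W] [Module F W]
variable {W' : Type*} [AddCommGroup W'] [Module F W']

lemma isInducedFrom_conj {η : Representation F H V} {ρ : Representation F G W}
    (hInd : IsInducedFrom H η ρ) (y : G) : IsInducedFrom H (ConjRep hH y η) ρ := by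
  obtain ⟨ι, hinj, hequiv, S, hS, hindep, hsup⟩ := hInd
  refine ⟨(ρ y⁻¹) ∘ₗ ι, ((rep_bijective ρ y⁻¹).injective).comp hinj, ?_,
    fun q => S (q * ((y⁻¹ : G) : G ⧸ H)), ?_, ?_, ?_⟩
  · intro h v
    show ρ y⁻¹ (ι (η (conjHom hH y h) v)) = ρ (h : G) (ρ y⁻¹ (ι v))
    rw [hequiv]
    rw [← Module.End.mul_apply, ← map_mul, ← Module.End.mul_apply (ρ (h:G)), ← map_mul]
    congr 2
    show y⁻¹ * (y * (h : G) * y⁻¹) = (h : G) * y⁻¹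
    group
  · intro g
    have h1 : ((g : G ⧸ H) * ((y⁻¹ : G) : G ⧸ H)) = ((g * y⁻¹ : G) : G ⧸ H) := by
      rw [QuotientGroup.mk_mul]
    dsimp only
    rw [h1, hS, LinearMap.range_comp, ← Submodule.map_comp, ← Module.End.mul_eq_comp, ← map_mul]
  · exact hindep.comp (Equiv.mulRight (((y⁻¹ : G) : G ⧸ H))).injective
  · exact (Equiv.mulRight (((y⁻¹ : G) : G ⧸ H))).iSup_comp (g := S) ▸ hsup

lemma repIso_of_isInducedFrom {σ : Representation F H V} {ρ : Representation F G W}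
    {ρ' : Representation F G W'} (h1 : IsInducedFrom H σ ρ) (h2 : IsInducedFrom H σ ρ') :
    RepIso ρ ρ' := by
  classical
  obtain ⟨ι, hinj, hequiv, S, hS, hindep, hsup⟩ := h1
  obtain ⟨ι', hinj', hequiv', S', hS', hindep', hsup'⟩ := h2
  set r : G ⧸ H → G := fun q => Quotient.out q with hr
  have hmkr : ∀ q : G ⧸ H, ((r q : G) : G ⧸ H) = q := fun q => Quotient.out_eq' q
  set A : (G ⧸ H) → V →ₗ[F] W := fun q => (ρ (r q)) ∘ₗ ι with hA
  set A' : (G ⧸ H) → V →ₗ[F] W' := fun q => (ρ' (r q)) ∘ₗ ι' with hA'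
  have hAinj : ∀ q, Function.Injective (A q) := fun q =>
    ((rep_bijective ρ (r q)).injective).comp hinj
  have hAinj' : ∀ q, Function.Injective (A' q) := fun q =>
    ((rep_bijective ρ' (r q)).injective).comp hinj'
  have hArange : ∀ q, LinearMap.range (A q) = S q := by
    intro q
    rw [hA]; dsimp only
    rw [LinearMap.range_comp, ← hS (r q), hmkr]
  have hArange' : ∀ q, LinearMap.range (A' q) = S' q := by
    intro q
    rw [hA']; dsimp only
    rw [LinearMap.range_comp, ← hS' (r q), hmkr]
  have hInt : DirectSum.IsInternal S :=
    (DirectSum.isInternal_submodule_iff_iSupIndep_and_iSup_eq_top S).mpr ⟨hindep, hsup⟩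
  have hInt' : DirectSum.IsInternal S' :=
    (DirectSum.isInternal_submodule_iff_iSupIndep_and_iSup_eq_top S').mpr ⟨hindep', hsup'⟩
  set eW := LinearEquiv.ofBijective (DirectSum.coeLinearMap S) hInt with heW
  set eW' := LinearEquiv.ofBijective (DirectSum.coeLinearMap S') hInt' with heW'
  set u := fun q : G ⧸ H =>
    (LinearEquiv.ofInjective (A q) (hAinj q)).trans (LinearEquiv.ofEq _ _ (hArange q)) with hu
  set u' := fun q : G ⧸ H =>
    (LinearEquiv.ofInjective (A' q) (hAinj' q)).trans (LinearEquiv.ofEq _ _ (hArange' q)) with hu'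
  have hucoe : ∀ q v, ((u q v : W)) = A q v := by
    intro q v
    rw [hu]
    simp [LinearEquiv.coe_ofEq_apply, LinearEquiv.ofInjective_apply]
  have hucoe' : ∀ q v, ((u' q v : W')) = A' q v := by
    intro q v
    rw [hu']
    simp [LinearEquiv.coe_ofEq_apply, LinearEquiv.ofInjective_apply]
  set Φ := DFinsupp.mapRange.linearEquiv (fun q => (u q).symm.trans (u' q)) with hΦ
  set e := (eW.symm.trans Φ).trans eW' with he
  have hkey : ∀ (q : G ⧸ H) (v : V), e (A q v) = A' q v := by
    intro q v
    have h1 : eW.symm (A q v) = DirectSum.of (fun q => S q) q (u q v) := by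
      rw [LinearEquiv.symm_apply_eq]
      show A q v = DirectSum.coeLinearMap S (DirectSum.of _ q (u q v))
      rw [DirectSum.coeLinearMap_of, hucoe]
    have h2 : Φ (DirectSum.of (fun q => S q) q (u q v)) =
        DirectSum.of (fun q => S' q) q (u' q v) := by
      ext j
      rw [hΦ, DFinsupp.mapRange.linearEquiv_apply, DFinsupp.mapRange_apply]
      by_cases hj : q = j
      · subst hj
        rw [DirectSum.of_eq_same, DirectSum.of_eq_same, LinearEquiv.trans_apply,
          LinearEquiv.symm_apply_apply]
      · rw [DirectSum.of_eq_of_ne _ _ _ (Ne.symm hj), DirectSum.of_eq_of_ne _ _ _ (Ne.symm hj), map_zero]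
    show eW' (Φ (eW.symm (A q v))) = A' q v
    rw [h1, h2]
    show DirectSum.coeLinearMap S' (DirectSum.of _ q (u' q v)) = A' q v
    rw [DirectSum.coeLinearMap_of, hucoe']
  refine ⟨e, ?_⟩
  intro g w
  have key : ∀ q : G ⧸ H, ∀ w ∈ S q, e (ρ g w) = ρ' g (e w) := by
    intro q w hw
    rw [← hArange q] at hw
    obtain ⟨v, rfl⟩ := hw
    set q' : G ⧸ H := ((g * r q : G) : G ⧸ H) with hq'
    have hh0 : (r q')⁻¹ * (g * r q) ∈ H := by
      rw [← QuotientGroup.eq]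
      rw [hmkr]
    set h0 : H := ⟨(r q')⁻¹ * (g * r q), hh0⟩ with hh0'
    have e1 : ρ g (A q v) = A q' (σ h0 v) := by
      show ρ g (ρ (r q) (ι v)) = ρ (r q') (ι (σ h0 v))
      rw [hequiv, ← Module.End.mul_apply, ← map_mul, ← Module.End.mul_apply, ← map_mul]
      congr 2
      show g * r q = r q' * ((r q')⁻¹ * (g * r q))
      group
    have e2 : ρ' g (A' q v) = A' q' (σ h0 v) := by
      show ρ' g (ρ' (r q) (ι' v)) = ρ' (r q') (ι' (σ h0 v))
      rw [hequiv', ← Module.End.mul_apply, ← map_mul, ← Module.End.mul_apply, ← map_mul]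
      congr 2
      show g * r q = r q' * ((r q')⁻¹ * (g * r q))
      group
    rw [e1, hkey, hkey, e2]
  set L : W →ₗ[F] W' :=
    (e.toLinearMap ∘ₗ (ρ g)) - ((ρ' g) ∘ₗ e.toLinearMap) with hL
  have hLker : ∀ q, S q ≤ LinearMap.ker L := by
    intro q w hw
    rw [LinearMap.mem_ker, hL]
    simp only [LinearMap.sub_apply, LinearMap.coe_comp, Function.comp_apply,
      LinearEquiv.coe_coe, sub_eq_zero]
    exact key q w hw
  have hker : L w = 0 := by
    have : (⊤ : Submodule F W) ≤ LinearMap.ker L := hsup ▸ iSup_le hLker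
    exact this trivial
  rw [hL] at hker
  simp only [LinearMap.sub_apply, LinearMap.coe_comp, Function.comp_apply,
    LinearEquiv.coe_coe, sub_eq_zero] at hker
  exact hker

end Induced

section Part2Helpers

variable {F : Type*} [Field F] {M : Type*} [Monoid M] {G : Type*} [Group G]
variable {V : Type*} [AddCommGroup V] [Module F V]
variable {W : Type*} [AddCommGroup W] [Module F W]
variable {W' : Type*} [AddCommGroup W'] [Module F W']

lemma subRep_apply (ρ : Representation F M W) (U : Submodule F W)
    (hU : ∀ g : M, ∀ v ∈ U, ρ g v ∈ U) (g : M) (v : U) :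
    ((SubRep ρ U hU g v : W)) = ρ g (v : W) := rfl

lemma ext_on_iSup {ι : Sort*} {T : ι → Submodule F W} (hsup : iSup T = ⊤)
    {f g : W →ₗ[F] W'} (h : ∀ i, ∀ w ∈ T i, f w = g w) : ∀ w, f w = g w := by
  intro w
  have h1 : iSup T ≤ LinearMap.ker (f - g) := by
    apply iSup_le
    intro i w hw
    rw [LinearMap.mem_ker, LinearMap.sub_apply, sub_eq_zero]
    exact h i w hw
  have h2 : (f - g) w = 0 := h1 (by rw [hsup]; trivial)
  rw [LinearMap.sub_apply, sub_eq_zero] at h2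
  exact h2

lemma RepIso.irred {ρ : Representation F M W} {ρ' : Representation F M W'}
    (h : RepIso ρ ρ') (hirr : RepIrred ρ) : RepIrred ρ' := by
  obtain ⟨e, he⟩ := h
  obtain ⟨hnt, hU⟩ := hirr
  constructor
  · exact e.symm.toEquiv.nontrivial
  · intro U hUinv
    have hc : ∀ g : M, ∀ v ∈ U.comap (e : W →ₗ[F] W'), ρ g v ∈ U.comap (e : W →ₗ[F] W') := by
      intro g v hv
      rw [Submodule.mem_comap] at hv ⊢
      rw [LinearEquiv.coe_coe, he]
      exact hUinv g _ hv
    rcases hU _ hc with h1 | h1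
    · left
      rw [eq_bot_iff]
      intro u hu
      have hm : e.symm u ∈ U.comap (e : W →ₗ[F] W') := by
        rw [Submodule.mem_comap, LinearEquiv.coe_coe, e.apply_symm_apply]
        exact hu
      rw [h1, Submodule.mem_bot] at hm
      have := congrArg e hm
      rw [e.apply_symm_apply, map_zero] at this
      exact this
    · right
      rw [eq_top_iff]
      intro u _
      have hm : e.symm u ∈ U.comap (e : W →ₗ[F] W') := h1 ▸ trivial
      rw [Submodule.mem_comap, LinearEquiv.coe_coe, e.apply_symm_apply] at hm
      exact hm

variable {H : Subgroup G} (hH : H.Normal)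

lemma repIrred_conjRep {η : Representation F H V} (hirr : RepIrred η) (y : G) :
    RepIrred (ConjRep hH y η) := by
  refine ⟨hirr.1, ?_⟩
  intro U hUinv
  apply hirr.2
  intro g v hv
  have hg' : (y⁻¹ : G) * (g : G) * y ∈ H := by
    have := hH.conj_mem (g : G) g.2 y⁻¹
    rwa [inv_inv] at this
  have := hUinv ⟨y⁻¹ * (g : G) * y, hg'⟩ v hv
  have heq : (ConjRep hH y η) ⟨y⁻¹ * (g : G) * y, hg'⟩ = η g := by
    show η ((conjHom hH y) ⟨y⁻¹ * (g : G) * y, hg'⟩) = η g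
    congr 1
    ext
    show y * (y⁻¹ * (g : G) * y) * y⁻¹ = (g : G)
    group
  rwa [heq] at this

lemma finiteDimensional_of_repIrred [Finite M] (ρ : Representation F M V)
    (hirr : RepIrred ρ) : FiniteDimensional F V := by
  classical
  have := Fintype.ofFinite M
  have : Nontrivial V := hirr.1
  obtain ⟨v, hv⟩ := exists_ne (0 : V)
  set U : Submodule F V := Submodule.span F (Set.range fun g : M => ρ g v) with hU
  have hinv : ∀ g : M, ∀ w ∈ U, ρ g w ∈ U := by
    intro g w hw
    have : Submodule.map (ρ g) U ≤ U := by
      rw [hU, Submodule.map_span]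
      apply Submodule.span_mono
      rintro _ ⟨_, ⟨m, rfl⟩, rfl⟩
      exact ⟨g * m, by show ρ (g * m) v = ρ g (ρ m v); rw [map_mul]; rfl⟩
    exact this ⟨w, hw, rfl⟩
  have hUne : U ≠ ⊥ := by
    intro hbot
    have hmem : v ∈ U := Submodule.subset_span ⟨1, by show ρ 1 v = v; rw [map_one]; rfl⟩
    rw [hbot, Submodule.mem_bot] at hmem
    exact hv hmem
  have hUtop : U = ⊤ := (hirr.2 U hinv).resolve_left hUne
  have hfd : FiniteDimensional F U := by
    rw [hU]
    exact FiniteDimensional.span_of_finite F (Set.finite_range _)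
  rw [hUtop] at hfd
  exact Module.Finite.equiv (Submodule.topEquiv)

lemma exists_minimal_invt [FiniteDimensional F W] (ρ : Representation F M W) :
    ∀ (U : Submodule F W), (∀ g, ∀ w ∈ U, ρ g w ∈ U) → U ≠ ⊥ →
      ∃ U₀, U₀ ≤ U ∧ (∀ g, ∀ w ∈ U₀, ρ g w ∈ U₀) ∧ U₀ ≠ ⊥ ∧
        ∀ U', U' ≤ U₀ → (∀ g, ∀ w ∈ U', ρ g w ∈ U') → U' ≠ ⊥ → U' = U₀ := by
  suffices h : ∀ n (U : Submodule F W), Module.finrank F U ≤ n →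
      (∀ g, ∀ w ∈ U, ρ g w ∈ U) → U ≠ ⊥ →
      ∃ U₀, U₀ ≤ U ∧ (∀ g, ∀ w ∈ U₀, ρ g w ∈ U₀) ∧ U₀ ≠ ⊥ ∧
        ∀ U', U' ≤ U₀ → (∀ g, ∀ w ∈ U', ρ g w ∈ U') → U' ≠ ⊥ → U' = U₀ by
    intro U hinv hne
    exact h (Module.finrank F U) U le_rfl hinv hne
  intro n
  induction n with
  | zero =>
    intro U hrk hinv hne
    exfalso
    apply hne
    rw [← Submodule.finrank_eq_zero (R := F)]
    omega
  | succ n ih =>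
    intro U hrk hinv hne
    by_cases hmin : ∀ U', U' ≤ U → (∀ g, ∀ w ∈ U', ρ g w ∈ U') → U' ≠ ⊥ → U' = U
    · exact ⟨U, le_rfl, hinv, hne, hmin⟩
    · push_neg at hmin
      obtain ⟨U', hU'le, hU'inv, hU'ne, hU'neU⟩ := hmin
      have hlt : U' < U := lt_of_le_of_ne hU'le hU'neU
      have : Module.finrank F U' < Module.finrank F U := Submodule.finrank_lt_finrank_of_lt hlt
      obtain ⟨U₀, h1, h2, h3, h4⟩ := ih U' (by omega) hU'inv hU'ne
      exact ⟨U₀, h1.trans hU'le, h2, h3, h4⟩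

lemma subrep_irred_iff (ρ : Representation F M W) (U : Submodule F W)
    (hU : ∀ g : M, ∀ v ∈ U, ρ g v ∈ U) :
    RepIrred (SubRep ρ U hU) ↔ (Nontrivial U ∧
      ∀ U' ≤ U, (∀ g, ∀ w ∈ U', ρ g w ∈ U') → U' = ⊥ ∨ U' = U) := by
  constructor
  · rintro ⟨hnt, hdich⟩
    refine ⟨hnt, ?_⟩
    intro U' hU'le hU'inv
    set U'' : Submodule F U := U'.comap U.subtype with hU''
    have hinv'' : ∀ g : M, ∀ v ∈ U'', SubRep ρ U hU g v ∈ U'' := by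
      intro g v hv
      rw [hU'', Submodule.mem_comap] at hv ⊢
      exact hU'inv g _ hv
    have hmapback : Submodule.map U.subtype U'' = U' := by
      rw [hU'', Submodule.map_comap_subtype, inf_eq_right.mpr hU'le]
    rcases hdich U'' hinv'' with h1 | h1
    · left
      rw [← hmapback, h1, Submodule.map_bot]
    · right
      rw [← hmapback, h1, Submodule.map_top, Submodule.range_subtype]
  · rintro ⟨hnt, hdich⟩
    refine ⟨hnt, ?_⟩
    intro U'' hinv''
    set U' : Submodule F W := U''.map U.subtype with hU'
    have hU'le : U' ≤ U := by
      rw [hU']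
      exact (Submodule.map_subtype_le U U'')
    have hU'inv : ∀ g, ∀ w ∈ U', ρ g w ∈ U' := by
      rintro g w ⟨v, hv, rfl⟩
      exact ⟨SubRep ρ U hU g v, hinv'' g v hv, rfl⟩
    have hinj : Function.Injective U.subtype := Subtype.val_injective
    rcases hdich U' hU'le hU'inv with h1 | h1
    · left
      rw [eq_bot_iff]
      intro v hv
      have : (v : W) ∈ U' := ⟨v, hv, rfl⟩
      rw [h1, Submodule.mem_bot] at this
      rw [Submodule.mem_bot]
      exact Subtype.ext this
    · right
      have : U''.map U.subtype = (⊤ : Submodule F U).map U.subtype := by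
        rw [Submodule.map_top, Submodule.range_subtype, ← hU', h1]
      exact Submodule.map_injective_of_injective hinj this

end Part2Helpers

open scoped DirectSum

section Part2

variable {F : Type*} [Field F] {G : Type*} [Group G] [Finite G]
variable {H : Subgroup G} (hH : H.Normal)
variable {V : Type*} [AddCommGroup V] [Module F V]
variable {W : Type*} [AddCommGroup W] [Module F W]

lemma part2 {p : ℕ} (hp : p.Prime) (hidx : H.index = p)
    {x : G} (hx : Subgroup.zpowers ((x : G ⧸ H)) = ⊤)
    {η : Representation F H V} (hirr : RepIrred η)
    (hne : ¬ RepIso η (ConjRep hH x η))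
    (ρ : Representation F G W) (hInd : IsInducedFrom H η ρ) : RepIrred ρ := by
  classical
  have hfinV : FiniteDimensional F V := finiteDimensional_of_repIrred η hirr
  obtain ⟨ι, hinj, hequiv, S, hS, hindep, hsup⟩ := hInd
  have hntV : Nontrivial V := hirr.1
  have hntW : Nontrivial W := by
    obtain ⟨v, hv⟩ := exists_ne (0 : V)
    exact ⟨⟨ι v, 0, fun hc => hv (hinj (by rw [hc, map_zero]))⟩⟩
  refine ⟨hntW, ?_⟩
  intro U hUinv
  by_cases hUbot : U = ⊥
  · exact Or.inl hUbot
  right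
  have hcard : Nat.card (G ⧸ H) = p := hidx
  have horder : orderOf ((x : G ⧸ H)) = p := orderOf_mk_eq hH hidx hx
  have hEinj : Function.Injective (fun i : Fin p => ((x : G ⧸ H)) ^ (i : ℕ)) := by
    intro i j hij
    rw [pow_eq_pow_iff_modEq, horder] at hij
    exact Fin.ext (Nat.ModEq.eq_of_lt_of_lt hij i.2 j.2)
  have hEbij : Function.Bijective (fun i : Fin p => ((x : G ⧸ H)) ^ (i : ℕ)) := by
    rw [Nat.bijective_iff_injective_and_card]
    exact ⟨hEinj, by simp [hcard]⟩
  set E : Fin p ≃ G ⧸ H := Equiv.ofBijective _ hEbij with hE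
  have hEapp : ∀ i : Fin p, E i = ((x ^ (i : ℕ) : G) : G ⧸ H) := by
    intro i
    show ((x : G ⧸ H)) ^ (i : ℕ) = _
    rw [QuotientGroup.mk_pow]
  set T : Fin p → Submodule F W := fun i => S (E i) with hT
  have hTind : iSupIndep T := hindep.comp E.injective
  have hTsup : iSup T = ⊤ := by
    rw [hT, E.iSup_comp (g := S)]
    exact hsup
  have hTeq : ∀ i : Fin p, T i = (LinearMap.range ι).map (ρ (x ^ (i : ℕ))) := by
    intro i
    rw [hT]
    dsimp only
    rw [hEapp i, hS]
  set ρH : Representation F H W := ρ.comp H.subtype with hρH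
  have hρHapp : ∀ (h : H) (w : W), ρH h w = ρ (h : G) w := fun h w => rfl
  have hTinv : ∀ i : Fin p, ∀ h : H, ∀ w ∈ T i, ρH h w ∈ T i := by
    intro i h w hw
    rw [hTeq i] at hw ⊢
    obtain ⟨_, ⟨v, rfl⟩, rfl⟩ := hw
    refine ⟨ι (η ⟨(x ^ (i : ℕ))⁻¹ * h * x ^ (i : ℕ), ?_⟩ v), ⟨_, rfl⟩, ?_⟩
    · have := hH.conj_mem (h : G) h.2 (x ^ (i : ℕ))⁻¹
      rwa [inv_inv] at this
    · rw [hequiv, hρHapp, ← Module.End.mul_apply, ← map_mul, ← Module.End.mul_apply, ← map_mul]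
      congr 2
      show x ^ (i : ℕ) * ((x ^ (i : ℕ))⁻¹ * ↑h * x ^ (i : ℕ)) = ↑h * x ^ (i : ℕ)
      group
  have hTiso : ∀ i : Fin p,
      RepIso (ConjRep hH (x ^ (i : ℕ))⁻¹ η) (SubRep ρH (T i) (hTinv i)) := by
    intro i
    set B : V →ₗ[F] W := (ρ (x ^ (i : ℕ))) ∘ₗ ι with hB
    have hBinj : Function.Injective B := ((rep_bijective ρ _).injective).comp hinj
    have hBrange : LinearMap.range B = T i := by
      rw [hB, LinearMap.range_comp, hTeq i]
    set e := (LinearEquiv.ofInjective B hBinj).trans (LinearEquiv.ofEq _ _ hBrange) with he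
    have hecoe : ∀ v, ((e v : W)) = B v := by
      intro v
      rw [he]
      simp [LinearEquiv.coe_ofEq_apply, LinearEquiv.ofInjective_apply]
    refine ⟨e, ?_⟩
    intro h v
    apply Subtype.ext
    rw [hecoe, subRep_apply, hecoe, hρHapp]
    show B (η ((conjHom hH (x ^ (i : ℕ))⁻¹) h) v) = ρ (↑h) (B v)
    rw [hB]
    show ρ (x ^ (i : ℕ)) (ι (η ((conjHom hH (x ^ (i : ℕ))⁻¹) h) v)) = ρ (↑h) (ρ (x ^ (i : ℕ)) (ι v))
    rw [hequiv, ← Module.End.mul_apply, ← map_mul, ← Module.End.mul_apply, ← map_mul]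
    congr 2
    show x ^ (i : ℕ) * ((x ^ (i : ℕ))⁻¹ * ↑h * ((x ^ (i : ℕ))⁻¹)⁻¹) = ↑h * x ^ (i : ℕ)
    group
  have hTirr : ∀ i : Fin p, RepIrred (SubRep ρH (T i) (hTinv i)) :=
    fun i => (hTiso i).irred (repIrred_conjRep hH hirr _)
  have hTdich : ∀ i : Fin p, ∀ U' ≤ T i, (∀ h : H, ∀ w ∈ U', ρH h w ∈ U') →
      U' = ⊥ ∨ U' = T i :=
    fun i => ((subrep_irred_iff ρH (T i) (hTinv i)).mp (hTirr i)).2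
  have hTnoniso : ∀ i j : Fin p,
      RepIso (SubRep ρH (T i) (hTinv i)) (SubRep ρH (T j) (hTinv j)) → i = j := by
    intro i j hiso
    have h1 : RepIso (ConjRep hH (x ^ (i : ℕ))⁻¹ η) (ConjRep hH (x ^ (j : ℕ))⁻¹ η) :=
      (hTiso i).trans (hiso.trans (hTiso j).symm)
    have h2 := RepIso.conj hH (x ^ (j : ℕ)) h1
    rw [conjRep_conjRep, conjRep_conjRep, inv_mul_cancel, conjRep_one] at h2
    have h3 := mem_of_repIso_conj hH hp hidx hx hne h2.symm
    have hmk : ((x : G ⧸ H)) ^ (i : ℕ) = ((x : G ⧸ H)) ^ (j : ℕ) := by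
      have := (QuotientGroup.eq_one_iff _).mpr h3
      rw [QuotientGroup.mk_mul, QuotientGroup.mk_inv, QuotientGroup.mk_pow,
        QuotientGroup.mk_pow, inv_mul_eq_one] at this
      exact this
    exact hEinj hmk
  have hIntT : DirectSum.IsInternal T :=
    (DirectSum.isInternal_submodule_iff_iSupIndep_and_iSup_eq_top T).mpr ⟨hTind, hTsup⟩
  set eT := LinearEquiv.ofBijective (DirectSum.coeLinearMap T) hIntT with heT
  set π : Fin p → W →ₗ[F] W := fun i => (T i).subtype ∘ₗ
    ((DFinsupp.lapply i : (⨁ j, ↥(T j)) →ₗ[F] ↥(T i)) ∘ₗ eT.symm.toLinearMap) with hπ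
  have hπmem : ∀ (i : Fin p) (w : W), π i w ∈ T i := by
    intro i w
    rw [hπ]
    exact ((eT.symm w) i).2
  have hπeq : ∀ (j : Fin p) (w : W) (_ : w ∈ T j) (i : Fin p),
      π i w = if i = j then w else 0 := by
    intro j w hw i
    rw [hπ]
    by_cases hij : i = j
    · subst hij
      rw [if_pos rfl]
      show ((eT.symm w) i : W) = w
      rw [heT, hIntT.ofBijective_coeLinearMap_of_mem hw]
    · rw [if_neg hij]
      show ((eT.symm w) i : W) = 0
      rw [heT, hIntT.ofBijective_coeLinearMap_of_mem_ne (Ne.symm hij) hw]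
      rfl
  have hπsum : ∀ w : W, ∑ i, π i w = w := by
    intro w
    have hfg : ∀ j, ∀ w' ∈ T j, (∑ i, π i) w' = (LinearMap.id : W →ₗ[F] W) w' := by
      intro j w' hw'
      rw [LinearMap.sum_apply, LinearMap.id_apply]
      rw [Finset.sum_eq_single_of_mem j (Finset.mem_univ j)
        (fun i _ hij => by rw [hπeq j w' hw' i, if_neg hij])]
      rw [hπeq j w' hw' j, if_pos rfl]
    have := ext_on_iSup hTsup hfg w
    rw [LinearMap.sum_apply, LinearMap.id_apply] at this
    exact this
  have hπcomm : ∀ (i : Fin p) (h : H) (w : W), π i (ρH h w) = ρH h (π i w) := by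
    intro i h w
    have hfg : ∀ j, ∀ w' ∈ T j, ((π i) ∘ₗ (ρH h)) w' = ((ρH h) ∘ₗ (π i)) w' := by
      intro j w' hw'
      show π i (ρH h w') = ρH h (π i w')
      rw [hπeq j (ρH h w') (hTinv j h w' hw') i, hπeq j w' hw' i]
      by_cases hij : i = j
      · rw [if_pos hij, if_pos hij]
      · rw [if_neg hij, if_neg hij, map_zero]
    exact ext_on_iSup hTsup hfg w
  have hfinT : ∀ i : Fin p, FiniteDimensional F (T i) := by
    intro i
    rw [hTeq i]
    infer_instance
  have hfinW : FiniteDimensional F W := by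
    haveI : ∀ i : Fin p, Module.Finite F (T i) := hfinT
    haveI : Module.Finite F (⨁ i, ↥(T i)) :=
      Module.Finite.equiv (DirectSum.linearEquivFunOnFintype F (Fin p) fun i => ↥(T i)).symm
    exact Module.Finite.equiv eT
  have hUinvH : ∀ h : H, ∀ w ∈ U, ρH h w ∈ U := fun h w hw => hUinv (h : G) w hw
  obtain ⟨U₀, hU₀U, hU₀inv, hU₀ne, hU₀min⟩ := exists_minimal_invt ρH U hUinvH hUbot
  have hU₀nt : Nontrivial U₀ := Submodule.nontrivial_iff_ne_bot.mpr hU₀ne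
  have hU₀irr : RepIrred (SubRep ρH U₀ hU₀inv) := by
    refine (subrep_irred_iff ρH U₀ hU₀inv).mpr ⟨hU₀nt, ?_⟩
    intro U' hle hinv'
    by_cases hb : U' = ⊥
    · exact Or.inl hb
    · exact Or.inr (hU₀min U' hle hinv' hb)
  have hex : ∃ i : Fin p, ∃ w ∈ U₀, π i w ≠ 0 := by
    by_contra hcon
    push_neg at hcon
    obtain ⟨w, hwU₀, hw0⟩ := Submodule.exists_mem_ne_zero_of_ne_bot hU₀ne
    apply hw0
    rw [← hπsum w]
    apply Finset.sum_eq_zero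
    intro i _
    exact hcon i w hwU₀
  have hiso : ∀ i : Fin p, (∃ w ∈ U₀, π i w ≠ 0) →
      RepIso (SubRep ρH U₀ hU₀inv) (SubRep ρH (T i) (hTinv i)) := by
    rintro i ⟨w1, hw1U, hw1⟩
    have hker : U₀ ⊓ LinearMap.ker (π i) = ⊥ := by
      by_contra hb
      have hinv' : ∀ h : H, ∀ w ∈ U₀ ⊓ LinearMap.ker (π i),
          ρH h w ∈ U₀ ⊓ LinearMap.ker (π i) := by
        intro h w hw
        rw [Submodule.mem_inf] at hw ⊢
        refine ⟨hU₀inv h w hw.1, ?_⟩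
        rw [LinearMap.mem_ker, hπcomm, LinearMap.mem_ker.mp hw.2, map_zero]
      have heq := hU₀min _ inf_le_left hinv' hb
      rw [← heq, Submodule.mem_inf] at hw1U
      exact hw1 (LinearMap.mem_ker.mp hw1U.2)
    have himle : U₀.map (π i) ≤ T i := by
      rintro _ ⟨w, hw, rfl⟩
      exact hπmem i w
    have himinv : ∀ h : H, ∀ w ∈ U₀.map (π i), ρH h w ∈ U₀.map (π i) := by
      rintro h _ ⟨w, hw, rfl⟩
      exact ⟨ρH h w, hU₀inv h w hw, hπcomm i h w⟩
    have himne : U₀.map (π i) ≠ ⊥ := by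
      intro hb
      apply hw1
      have : π i w1 ∈ U₀.map (π i) := ⟨w1, hw1U, rfl⟩
      rwa [hb, Submodule.mem_bot] at this
    have him : U₀.map (π i) = T i := (hTdich i _ himle himinv).resolve_left himne
    set φ : U₀ →ₗ[F] T i :=
      LinearMap.codRestrict (T i) ((π i) ∘ₗ U₀.subtype) (fun u => hπmem i u) with hφ
    have hφbij : Function.Bijective φ := by
      constructor
      · intro a b hab
        have hval : π i (a : W) = π i (b : W) := congrArg Subtype.val hab
        have hmem : ((a : W) - b) ∈ U₀ ⊓ LinearMap.ker (π i) :=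
          Submodule.mem_inf.mpr ⟨U₀.sub_mem a.2 b.2,
            by rw [LinearMap.mem_ker, map_sub, hval, sub_self]⟩
        rw [hker, Submodule.mem_bot, sub_eq_zero] at hmem
        exact Subtype.ext hmem
      · intro t
        have : (t : W) ∈ U₀.map (π i) := by rw [him]; exact t.2
        obtain ⟨w, hw, hwt⟩ := this
        exact ⟨⟨w, hw⟩, Subtype.ext hwt⟩
    refine ⟨LinearEquiv.ofBijective φ hφbij, ?_⟩
    intro h u
    apply Subtype.ext
    show π i (ρH h (u : W)) = ρH h (π i (u : W))
    exact hπcomm i h (u : W)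
  obtain ⟨i0, hi0⟩ := hex
  have iso0 := hiso i0 hi0
  have hzero : ∀ j : Fin p, j ≠ i0 → ∀ w ∈ U₀, π j w = 0 := by
    intro j hj w hw
    by_contra hb
    have isoj := hiso j ⟨w, hw, hb⟩
    exact hj (hTnoniso j i0 (isoj.symm.trans iso0))
  have hU₀le : U₀ ≤ T i0 := by
    intro w hw
    have hsum : ∑ j, π j w = π i0 w :=
      Finset.sum_eq_single_of_mem i0 (Finset.mem_univ _)
        (fun j _ hj => hzero j hj w hw)
    have : w = π i0 w := by rw [← hsum, hπsum w]
    rw [this]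
    exact hπmem i0 w
  have hU₀eq : U₀ = T i0 := (hTdich i0 U₀ hU₀le hU₀inv).resolve_left hU₀ne
  have hTi0U : T i0 ≤ U := hU₀eq ▸ hU₀U
  have hstep : ∀ k : ℕ, S ((x ^ k : G) : G ⧸ H) ≤ U → S ((x ^ (k + 1) : G) : G ⧸ H) ≤ U := by
    intro k hk
    rw [hS] at hk ⊢
    have h1 : (LinearMap.range ι).map (ρ (x ^ (k + 1))) =
        ((LinearMap.range ι).map (ρ (x ^ k))).map (ρ x) := by
      rw [pow_succ', map_mul, Module.End.mul_eq_comp, Submodule.map_comp]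
    rw [h1]
    rintro _ ⟨w', hw', rfl⟩
    exact hUinv x w' (hk hw')
  have hall : ∀ k : ℕ, S ((x ^ ((i0 : ℕ) + k) : G) : G ⧸ H) ≤ U := by
    intro k
    induction k with
    | zero =>
      have heq : ((x ^ ((i0 : ℕ) + 0) : G) : G ⧸ H) = E i0 := by
        rw [Nat.add_zero, hEapp i0]
      rw [heq]
      exact hTi0U
    | succ k ih =>
      exact hstep ((i0 : ℕ) + k) ih
  have hcover : ∀ j : Fin p, T j ≤ U := by
    intro j
    have hxp : ((x : G ⧸ H)) ^ p = 1 := by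
      rw [← horder]
      exact pow_orderOf_eq_one _
    have hmkp : ((x ^ ((j : ℕ) + p) : G) : G ⧸ H) = ((x ^ (j : ℕ) : G) : G ⧸ H) := by
      rw [QuotientGroup.mk_pow, QuotientGroup.mk_pow, pow_add, hxp, mul_one]
    have hk : (i0 : ℕ) + ((j : ℕ) + p - (i0 : ℕ)) = (j : ℕ) + p := by
      have h2 : (i0 : ℕ) ≤ (j : ℕ) + p := le_trans (le_of_lt i0.2) (Nat.le_add_left p _)
      omega
    have hle := hall ((j : ℕ) + p - (i0 : ℕ))
    rw [hk, hmkp] at hle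
    rw [hT]
    dsimp only
    rw [hEapp j]
    exact hle
  rw [eq_top_iff, ← hTsup]
  exact iSup_le hcover

end Part2



/-- Over a not necessarily algebraically closed field `F`, if `η ≇ η^x` then
`η, η^x, …, η^{x^{p-1}}` are pairwise inequivalent, `η↑_H^G` is irreducible, and all the
`η^{x^i}↑_H^G` are equivalent. -/
theorem stmt_5 {F : Type*} [Field F] {G : Type*} [Group G] [Fintype G]
    (hchar : CharZero F ∨ Nat.Coprime (ringChar F) (Fintype.card G))
    (p : ℕ) (hp : p.Prime) (H : Subgroup G) [hH : H.Normal] (hidx : H.index = p)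
    (x : G) (hx : Subgroup.zpowers ((x : G ⧸ H)) = ⊤)
    {V : Type*} [AddCommGroup V] [Module F V]
    (η : Representation F H V) (hirr : RepIrred η)
    (hne : ¬ RepIso η (ConjRep hH x η)) :
    (∀ i j : Fin p, i ≠ j →
        ¬ RepIso (ConjRep hH (x ^ (i : ℕ)) η) (ConjRep hH (x ^ (j : ℕ)) η)) ∧
    (∀ {W : Type*} [AddCommGroup W] [Module F W] (ρ : Representation F G W),
        IsInducedFrom H η ρ → RepIrred ρ) ∧
    (∀ (i : Fin p) {W W' : Type*} [AddCommGroup W] [Module F W]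
        [AddCommGroup W'] [Module F W']
        (ρ : Representation F G W) (ρ' : Representation F G W'),
        IsInducedFrom H η ρ → IsInducedFrom H (ConjRep hH (x ^ (i : ℕ)) η) ρ' →
        RepIso ρ ρ') := by
  refine ⟨part1 hH hp hidx hx hne, ?_, ?_⟩
  · intro W _ _ ρ hInd
    exact part2 hH hp hidx hx hirr hne ρ hInd
  · intro i W W' _ _ _ _ ρ ρ' hInd hInd'
    exact repIso_of_isInducedFrom (isInducedFrom_conj hH hInd (x ^ (i : ℕ))) hInd'
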